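/- Let Act be a finite set and for each α ∈ Act let E_α be a trace-preserving super-operator on d×d complex matrices with Kraus operators (E_{α,i})_{i∈I_α}. For every set r ⊆ ℂ^d that is a finite union of subspaces, there exists a set x ⊆ r, itself a finite union of subspaces, such that ⋃_{α∈Act} E_α⟨x⟩ = x, and for every finite union of subspaces x' ⊆ r with ⋃_{α∈Act} E_α⟨x'⟩ = x' one has x' ⊆ x (the maximal invariant of r). -/

import Mathlib

open Matrix ComplexOrder

/-- `E⟨V⟩ := ⨆_i E_i(V)`, the span of all `E_i v` with `v ∈ V`. -/
noncomputable def supSpan {d : ℕ} {I : Type} [Fintype I]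
    (E : I → Matrix (Fin d) (Fin d) ℂ) (V : Submodule ℂ (Fin d → ℂ)) :
    Submodule ℂ (Fin d → ℂ) :=
  ⨆ i, V.map (E i).mulVecLin

/-- `E⟨X⟩` for an arbitrary set `X`: the union of `E⟨V⟩` over all subspaces `V ⊆ X`. -/
noncomputable def applySet {d : ℕ} {I : Type} [Fintype I]
    (E : I → Matrix (Fin d) (Fin d) ℂ) (X : Set (Fin d → ℂ)) : Set (Fin d → ℂ) :=
  ⋃ V ∈ {V : Submodule ℂ (Fin d → ℂ) | (V : Set (Fin d → ℂ)) ⊆ X},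
    ((supSpan E V : Submodule ℂ (Fin d → ℂ)) : Set (Fin d → ℂ))

/-- A set is a finite union of linear subspaces. -/
def IsFinUnionSubspaces {d : ℕ} (X : Set (Fin d → ℂ)) : Prop :=
  ∃ (m : ℕ) (V : Fin m → Submodule ℂ (Fin d → ℂ)), X = ⋃ i, (V i : Set (Fin d → ℂ))

set_option linter.unusedSectionVars false
set_option linter.unusedVariables false
set_option linter.unnecessarySimpa false

namespace MaxInv

variable {d : ℕ}

/-- A subspace covered by finitely many subspaces is contained in one of them. -/
theorem exists_le_of_subset_finset (S : Finset (Submodule ℂ (Fin d → ℂ)))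
    (V : Submodule ℂ (Fin d → ℂ))
    (h : (V : Set (Fin d → ℂ)) ⊆ ⋃ W ∈ S, (W : Set (Fin d → ℂ))) :
    ∃ W ∈ S, V ≤ W := by
  classical
  induction S using Finset.induction_on with
  | empty =>
    exfalso
    have := h V.zero_mem
    simpa using this
  | @insert a S ha IH =>
    by_cases h1 : (V : Set (Fin d → ℂ)) ⊆ ⋃ W ∈ S, (W : Set (Fin d → ℂ))
    · obtain ⟨W, hW, hVW⟩ := IH h1
      exact ⟨W, Finset.mem_insert_of_mem hW, hVW⟩
    by_cases h2 : V ≤ a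
    · exact ⟨a, Finset.mem_insert_self _ _, h2⟩
    exfalso
    obtain ⟨u, hu, hu'⟩ := Set.not_subset.mp h1
    have hua : u ∈ a := by
      have := h hu
      simp only [Set.mem_iUnion, SetLike.mem_coe, exists_prop, Finset.mem_insert] at this
      obtain ⟨W, hW | hW, hmem⟩ := this
      · exact hW ▸ hmem
      · exact absurd (by
          simp only [Set.mem_iUnion, SetLike.mem_coe, exists_prop]
          exact ⟨W, hW, hmem⟩) hu'
    obtain ⟨v, hv, hva⟩ := SetLike.not_le_iff_exists.mp h2
    have key : ∀ c : ℂ, ∃ W ∈ insert a S, v + c • u ∈ W := by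
      intro c
      have hmem : v + c • u ∈ V := V.add_mem hv (V.smul_mem c hu)
      have := h hmem
      simp only [Set.mem_iUnion, SetLike.mem_coe, exists_prop] at this
      exact this
    choose W hWmem hWmem' using key
    have : ∃ c c' : ℂ, c ≠ c' ∧
        (⟨W c, hWmem c⟩ : {x // x ∈ insert a S}) = ⟨W c', hWmem c'⟩ :=
      Finite.exists_ne_map_eq_of_infinite _
    obtain ⟨c, c', hcc', heq⟩ := this
    have hWeq : W c = W c' := congrArg Subtype.val heq
    have huW : u ∈ W c := by
      have hsub : (c - c') • u ∈ W c := by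
        have : (v + c • u) - (v + c' • u) = (c - c') • u := by
          rw [sub_smul]; abel
        rw [← this]
        exact (W c).sub_mem (hWmem' c) (hWeq ▸ hWmem' c')
      have := (W c).smul_mem (c - c')⁻¹ hsub
      rwa [smul_smul, inv_mul_cancel₀ (sub_ne_zero.mpr hcc'), one_smul] at this
    have hvW : v ∈ W c := by
      have := (W c).sub_mem (hWmem' c) ((W c).smul_mem c huW)
      simpa using this
    rcases Finset.mem_insert.mp (hWmem c) with hWa | hWS
    · exact hva (hWa ▸ hvW)
    · exact hu' (by
        simp only [Set.mem_iUnion, SetLike.mem_coe, exists_prop]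
        exact ⟨W c, hWS, huW⟩)

theorem exists_le_of_subset {ι : Type} [Fintype ι] (v : ι → Submodule ℂ (Fin d → ℂ))
    (V : Submodule ℂ (Fin d → ℂ))
    (h : (V : Set (Fin d → ℂ)) ⊆ ⋃ i, (v i : Set (Fin d → ℂ))) :
    ∃ i, V ≤ v i := by
  classical
  have h' : (V : Set (Fin d → ℂ)) ⊆ ⋃ W ∈ Finset.image v Finset.univ, (W : Set (Fin d → ℂ)) := by
    refine h.trans ?_
    intro x hx
    simp only [Set.mem_iUnion, SetLike.mem_coe, exists_prop, Finset.mem_image] at *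
    obtain ⟨i, hi⟩ := hx
    exact ⟨v i, ⟨i, Finset.mem_univ i, rfl⟩, hi⟩
  obtain ⟨W, hW, hVW⟩ := exists_le_of_subset_finset _ _ h'
  obtain ⟨i, -, rfl⟩ := Finset.mem_image.mp hW
  exact ⟨i, hVW⟩


theorem supSpan_mono {I : Type} [Fintype I] (E : I → Matrix (Fin d) (Fin d) ℂ)
    {V W : Submodule ℂ (Fin d → ℂ)} (h : V ≤ W) : supSpan E V ≤ supSpan E W :=
  iSup_mono fun i => Submodule.map_mono h

/-- a union of subspaces over any fintype is a finite union of subspaces -/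
theorem isFUS_of_fintype {ι : Type} [Fintype ι] (v : ι → Submodule ℂ (Fin d → ℂ)) :
    IsFinUnionSubspaces (⋃ i, (v i : Set (Fin d → ℂ))) := by
  refine ⟨Fintype.card ι, v ∘ (Fintype.equivFin ι).symm, ?_⟩
  ext x
  simp only [Set.mem_iUnion, Function.comp_apply]
  exact ⟨fun ⟨i, hi⟩ => ⟨Fintype.equivFin ι i, by simpa using hi⟩,
    fun ⟨j, hj⟩ => ⟨(Fintype.equivFin ι).symm j, hj⟩⟩

theorem mem_applySet {I : Type} [Fintype I] (F : I → Matrix (Fin d) (Fin d) ℂ)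
    {X : Set (Fin d → ℂ)} {x : Fin d → ℂ} :
    x ∈ applySet F X ↔ ∃ V : Submodule ℂ (Fin d → ℂ),
      (V : Set (Fin d → ℂ)) ⊆ X ∧ x ∈ supSpan F V := by
  simp [applySet, Set.mem_iUnion]

theorem applySet_mono {I : Type} [Fintype I] (F : I → Matrix (Fin d) (Fin d) ℂ)
    {X Y : Set (Fin d → ℂ)} (h : X ⊆ Y) : applySet F X ⊆ applySet F Y := by
  intro x hx
  rw [mem_applySet] at hx ⊢
  obtain ⟨V, hV, hxV⟩ := hx
  exact ⟨V, hV.trans h, hxV⟩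

theorem applySet_eq {I : Type} [Fintype I] (F : I → Matrix (Fin d) (Fin d) ℂ)
    {ι : Type} [Fintype ι] (v : ι → Submodule ℂ (Fin d → ℂ)) :
    applySet F (⋃ i, (v i : Set (Fin d → ℂ)))
      = ⋃ j, ((supSpan F (v j) : Submodule ℂ (Fin d → ℂ)) : Set (Fin d → ℂ)) := by
  apply subset_antisymm
  · intro x hx
    rw [mem_applySet] at hx
    obtain ⟨V, hV, hxV⟩ := hx
    obtain ⟨j, hj⟩ := exists_le_of_subset v V hV
    exact Set.mem_iUnion.mpr ⟨j, supSpan_mono F hj hxV⟩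
  · intro x hx
    obtain ⟨j, hj⟩ := Set.mem_iUnion.mp hx
    rw [mem_applySet]
    exact ⟨v j, Set.subset_iUnion (fun i => ((v i : Submodule ℂ (Fin d → ℂ)) : Set (Fin d → ℂ))) j, hj⟩

section Ops
variable {Act : Type} [Fintype Act] {I : Act → Type} [∀ α, Fintype (I α)]
  (E : (α : Act) → I α → Matrix (Fin d) (Fin d) ℂ)

/-- the one-step operator -/
noncomputable def Phi (X : Set (Fin d → ℂ)) : Set (Fin d → ℂ) := ⋃ α, applySet (E α) X

theorem Phi_mono {X Y : Set (Fin d → ℂ)} (h : X ⊆ Y) : Phi E X ⊆ Phi E Y :=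
  Set.iUnion_mono fun α => applySet_mono (E α) h

theorem Phi_eq {ι : Type} [Fintype ι] (v : ι → Submodule ℂ (Fin d → ℂ)) :
    Phi E (⋃ i, (v i : Set (Fin d → ℂ)))
      = ⋃ p : Act × ι, ((supSpan (E p.1) (v p.2) : Submodule ℂ (Fin d → ℂ)) : Set (Fin d → ℂ)) := by
  unfold Phi
  rw [Set.iUnion_prod']
  exact Set.iUnion_congr fun α => applySet_eq (E α) v

theorem isFUS_Phi {X : Set (Fin d → ℂ)} (hX : IsFinUnionSubspaces X) :
    IsFinUnionSubspaces (Phi E X) := by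
  obtain ⟨m, v, rfl⟩ := hX
  rw [Phi_eq]
  exact isFUS_of_fintype _

/-- the "good subspaces" operator: union of subspaces of `X` all whose one-step images
stay inside `X` -/
noncomputable def Gop (X : Set (Fin d → ℂ)) : Set (Fin d → ℂ) :=
  ⋃ V ∈ {V : Submodule ℂ (Fin d → ℂ) | (V : Set (Fin d → ℂ)) ⊆ X ∧
      ∀ α, ((supSpan (E α) V : Submodule ℂ (Fin d → ℂ)) : Set (Fin d → ℂ)) ⊆ X},
    (V : Set (Fin d → ℂ))

theorem mem_Gop {X : Set (Fin d → ℂ)} {x : Fin d → ℂ} :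
    x ∈ Gop E X ↔ ∃ V : Submodule ℂ (Fin d → ℂ), ((V : Set (Fin d → ℂ)) ⊆ X ∧
      ∀ α, ((supSpan (E α) V : Submodule ℂ (Fin d → ℂ)) : Set (Fin d → ℂ)) ⊆ X) ∧ x ∈ V := by
  simp [Gop, Set.mem_iUnion]

theorem Gop_subset (X : Set (Fin d → ℂ)) : Gop E X ⊆ X := by
  intro x hx
  obtain ⟨V, ⟨hV, -⟩, hxV⟩ := (mem_Gop E).mp hx
  exact hV hxV

/-- explicit finite representation of `Gop` -/
theorem Gop_rep {m : ℕ} (v : Fin m → Submodule ℂ (Fin d → ℂ)) :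
    ∃ (κ : Type) (_ : Fintype κ) (U : κ → Submodule ℂ (Fin d → ℂ)),
      (Gop E (⋃ i, (v i : Set (Fin d → ℂ))) = ⋃ p, (U p : Set (Fin d → ℂ))) ∧
      ∀ p, ((U p : Submodule ℂ (Fin d → ℂ)) : Set (Fin d → ℂ)) ⊆ (⋃ i, (v i : Set (Fin d → ℂ))) ∧
        ∀ α, ((supSpan (E α) (U p) : Submodule ℂ (Fin d → ℂ)) : Set (Fin d → ℂ))
          ⊆ ⋃ i, (v i : Set (Fin d → ℂ)) := by
  classical
  set X := ⋃ i, (v i : Set (Fin d → ℂ)) with hXdef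
  refine ⟨Fin m × (Act → Fin m), inferInstance,
    fun p => v p.1 ⊓ ⨅ α, ⨅ i : I α, Submodule.comap (E α i).mulVecLin (v (p.2 α)), ?_, ?_⟩
  · apply subset_antisymm
    · intro x hx
      obtain ⟨V, ⟨hVX, hVα⟩, hxV⟩ := (mem_Gop E).mp hx
      obtain ⟨j, hj⟩ := exists_le_of_subset v V hVX
      have ht : ∀ α, ∃ k, supSpan (E α) V ≤ v k := fun α =>
        exists_le_of_subset v (supSpan (E α) V) (hVα α)
      choose t ht using ht
      refine Set.mem_iUnion.mpr ⟨(j, t), ?_⟩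
      refine (le_inf hj (le_iInf fun α => le_iInf fun i => ?_) : V ≤ _) hxV
      exact Submodule.map_le_iff_le_comap.mp
        ((le_iSup (fun i => V.map (E α i).mulVecLin) i).trans (ht α))
    · intro x hx
      obtain ⟨p, hp⟩ := Set.mem_iUnion.mp hx
      refine (mem_Gop E).mpr ⟨_, ⟨?_, ?_⟩, hp⟩
      · exact (Set.Subset.trans (SetLike.coe_subset_coe.mpr inf_le_left)
          (Set.subset_iUnion (fun i => ((v i : Submodule ℂ (Fin d → ℂ)) : Set (Fin d → ℂ))) p.1))
      · intro α
        have : supSpan (E α) (v p.1 ⊓ ⨅ α, ⨅ i : I α,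
            Submodule.comap (E α i).mulVecLin (v (p.2 α))) ≤ v (p.2 α) := by
          refine iSup_le fun i => Submodule.map_le_iff_le_comap.mpr ?_
          exact inf_le_right.trans ((iInf_le _ α).trans (iInf_le _ i))
        exact (SetLike.coe_subset_coe.mpr this).trans
          (Set.subset_iUnion (fun i => ((v i : Submodule ℂ (Fin d → ℂ)) : Set (Fin d → ℂ))) (p.2 α))
  · rintro ⟨j, t⟩
    constructor
    · exact (Set.Subset.trans (SetLike.coe_subset_coe.mpr inf_le_left)
        (Set.subset_iUnion (fun i => ((v i : Submodule ℂ (Fin d → ℂ)) : Set (Fin d → ℂ))) j))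
    · intro α
      have : supSpan (E α) (v j ⊓ ⨅ α, ⨅ i : I α,
          Submodule.comap (E α i).mulVecLin (v (t α))) ≤ v (t α) := by
        refine iSup_le fun i => Submodule.map_le_iff_le_comap.mpr ?_
        exact inf_le_right.trans ((iInf_le _ α).trans (iInf_le _ i))
      exact (SetLike.coe_subset_coe.mpr this).trans
        (Set.subset_iUnion (fun i => ((v i : Submodule ℂ (Fin d → ℂ)) : Set (Fin d → ℂ))) (t α))

end Ops

/-- maximal subspaces contained in `X` -/
def Mx (X : Set (Fin d → ℂ)) : Set (Submodule ℂ (Fin d → ℂ)) :=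
  {V | (V : Set (Fin d → ℂ)) ⊆ X ∧
    ∀ W : Submodule ℂ (Fin d → ℂ), (W : Set (Fin d → ℂ)) ⊆ X → V ≤ W → W = V}

theorem rank_le (W : Submodule ℂ (Fin d → ℂ)) : Module.finrank ℂ W ≤ d := by
  have := Submodule.finrank_le W
  rwa [Module.finrank_fin_fun] at this

theorem mx_exists {ι : Type} [Fintype ι] (v : ι → Submodule ℂ (Fin d → ℂ))
    (V : Submodule ℂ (Fin d → ℂ))
    (hV : (V : Set (Fin d → ℂ)) ⊆ ⋃ i, (v i : Set (Fin d → ℂ))) :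
    ∃ W ∈ Mx (⋃ i, (v i : Set (Fin d → ℂ))), V ≤ W := by
  classical
  set A : Set (Submodule ℂ (Fin d → ℂ)) := {W | (∃ i, W = v i) ∧ V ≤ W} with hA
  have hfin : A.Finite := (Set.finite_range v).subset (by rintro W ⟨⟨i, rfl⟩, -⟩; exact ⟨i, rfl⟩)
  have hne : A.Nonempty := by
    obtain ⟨j, hj⟩ := exists_le_of_subset v V hV
    exact ⟨v j, ⟨j, rfl⟩, hj⟩
  obtain ⟨a, haA, hamax⟩ := Set.Finite.exists_maximalFor id A hfin hne
  obtain ⟨⟨i, rfl⟩, hVa⟩ := haA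
  refine ⟨v i, ⟨Set.subset_iUnion (fun k => ((v k : Submodule ℂ (Fin d → ℂ)) : Set (Fin d → ℂ))) i,
    ?_⟩, hVa⟩
  intro W hWX hle
  obtain ⟨j, hj⟩ := exists_le_of_subset v W hWX
  have hvj : v j ∈ A := ⟨⟨j, rfl⟩, hVa.trans (hle.trans hj)⟩
  have := hamax (j := v j) hvj (hle.trans hj)
  exact le_antisymm (hj.trans this) hle

theorem mx_finite {ι : Type} [Fintype ι] (v : ι → Submodule ℂ (Fin d → ℂ)) :
    (Mx (⋃ i, (v i : Set (Fin d → ℂ)))).Finite := by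
  refine (Set.finite_range v).subset ?_
  rintro W ⟨hWX, hWmax⟩
  obtain ⟨j, hj⟩ := exists_le_of_subset v W hWX
  exact ⟨j, hWmax (v j)
    (Set.subset_iUnion (fun k => ((v k : Submodule ℂ (Fin d → ℂ)) : Set (Fin d → ℂ))) j) hj⟩

theorem mx_union {ι : Type} [Fintype ι] (v : ι → Submodule ℂ (Fin d → ℂ)) :
    (⋃ i, (v i : Set (Fin d → ℂ)))
      = ⋃ W ∈ Mx (⋃ i, (v i : Set (Fin d → ℂ))), (W : Set (Fin d → ℂ)) := by
  apply subset_antisymm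
  · intro x hx
    obtain ⟨i, hi⟩ := Set.mem_iUnion.mp hx
    obtain ⟨W, hW, hle⟩ := mx_exists v (v i)
      (Set.subset_iUnion (fun k => ((v k : Submodule ℂ (Fin d → ℂ)) : Set (Fin d → ℂ))) i)
    exact Set.mem_biUnion hW (hle hi)
  · intro x hx
    obtain ⟨W, hW, hxW⟩ := Set.mem_iUnion₂.mp hx
    exact hW.1 hxW

/-- lexicographic measure: number of maximal subspaces of each codimension -/
noncomputable def mu (X : Set (Fin d → ℂ)) : Fin (d + 1) → ℕ := fun i =>
  Set.ncard {W ∈ Mx X | Module.finrank ℂ W = d - (i : ℕ)}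

theorem mu_descent {X Y : Set (Fin d → ℂ)} (hX : IsFinUnionSubspaces X)
    (hY : IsFinUnionSubspaces Y) (hYX : Y ⊆ X) (hne : Y ≠ X) :
    Pi.Lex (· < ·) (fun {_} => (· < ·)) (mu Y) (mu X) := by
  classical
  obtain ⟨mX, vX, rfl⟩ := hX
  obtain ⟨mY, vY, rfl⟩ := hY
  set X := ⋃ i, (vX i : Set (Fin d → ℂ))
  set Y := ⋃ i, (vY i : Set (Fin d → ℂ))
  have hbad : ∃ V ∈ Mx X, ¬ ((V : Set (Fin d → ℂ)) ⊆ Y) := by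
    by_contra h
    push_neg at h
    apply hne
    apply subset_antisymm hYX
    calc X = ⋃ W ∈ Mx X, (W : Set (Fin d → ℂ)) := mx_union vX
    _ ⊆ Y := Set.iUnion₂_subset h
  have hP : ∃ n, ∃ V, V ∈ Mx X ∧ Module.finrank ℂ V = d - n ∧
      ¬ ((V : Set (Fin d → ℂ)) ⊆ Y) := by
    obtain ⟨V, hV, hVn⟩ := hbad
    exact ⟨d - Module.finrank ℂ V, V, hV, (Nat.sub_sub_self (rank_le V)).symm, hVn⟩
  set i₀ := Nat.find hP with hi₀def
  obtain ⟨Vs, hVsmx, hVsr, hVsn⟩ := Nat.find_spec hP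
  have hi₀d : i₀ ≤ d := by
    have h1 : i₀ ≤ d - Module.finrank ℂ Vs :=
      Nat.find_min' hP ⟨Vs, hVsmx, (Nat.sub_sub_self (rank_le Vs)).symm, hVsn⟩
    omega
  have S1 : ∀ V ∈ Mx X, d - Module.finrank ℂ V < i₀ → (V : Set (Fin d → ℂ)) ⊆ Y := by
    intro V hV hlt
    by_contra hns
    exact Nat.find_min hP hlt ⟨V, hV, (Nat.sub_sub_self (rank_le V)).symm, hns⟩
  have S2 : ∀ V ∈ Mx X, (V : Set (Fin d → ℂ)) ⊆ Y → V ∈ Mx Y := by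
    rintro V ⟨hVX, hmax⟩ hVY
    exact ⟨hVY, fun W hWY hle => hmax W (hWY.trans hYX) hle⟩
  have S3 : ∀ W ∈ Mx Y, ∃ V ∈ Mx X, W ≤ V := by
    rintro W ⟨hWY, -⟩
    exact mx_exists vX W (hWY.trans hYX)
  have E1 : ∀ j : ℕ, j < i₀ →
      {W ∈ Mx Y | Module.finrank ℂ W = d - j} = {W ∈ Mx X | Module.finrank ℂ W = d - j} := by
    intro j hj
    have hjd : j ≤ d := hj.le.trans hi₀d
    ext W
    constructor
    · rintro ⟨hWmxY, hWr⟩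
      obtain ⟨V, hVmx, hWV⟩ := S3 W hWmxY
      have hrle : Module.finrank ℂ W ≤ Module.finrank ℂ V := Submodule.finrank_mono hWV
      have h1 : d - Module.finrank ℂ V < i₀ := by
        have : d - Module.finrank ℂ V ≤ d - Module.finrank ℂ W := Nat.sub_le_sub_left hrle d
        rw [hWr, Nat.sub_sub_self hjd] at this
        omega
      have hVmxY := S2 V hVmx (S1 V hVmx h1)
      have hVW : V = W := hWmxY.2 V hVmxY.1 hWV
      rw [← hVW] at hWr ⊢
      exact ⟨hVmx, hWr⟩
    · rintro ⟨hVmx, hVr⟩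
      have h1 : d - Module.finrank ℂ W < i₀ := by rw [hVr, Nat.sub_sub_self hjd]; exact hj
      exact ⟨S2 W hVmx (S1 W hVmx h1), hVr⟩
  have E2sub : {W ∈ Mx Y | Module.finrank ℂ W = d - i₀}
      ⊆ {W ∈ Mx X | Module.finrank ℂ W = d - i₀} := by
    rintro W ⟨hWmxY, hWr⟩
    obtain ⟨V, hVmx, hWV⟩ := S3 W hWmxY
    by_cases h1 : d - Module.finrank ℂ V < i₀
    · have hVmxY := S2 V hVmx (S1 V hVmx h1)
      have hVW : V = W := hWmxY.2 V hVmxY.1 hWV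
      rw [hVW, hWr, Nat.sub_sub_self hi₀d] at h1
      omega
    · push_neg at h1
      have hle : Module.finrank ℂ V ≤ d - i₀ := by
        have h2 := Nat.sub_sub_self (rank_le V)
        omega
      have hWVeq : W = V := Submodule.eq_of_le_of_finrank_le hWV (hle.trans_eq hWr.symm)
      rw [hWVeq] at hWr ⊢
      exact ⟨hVmx, hWr⟩
  have E2 : {W ∈ Mx Y | Module.finrank ℂ W = d - i₀}
      ⊂ {W ∈ Mx X | Module.finrank ℂ W = d - i₀} := by
    refine ⟨E2sub, fun hsup => ?_⟩
    have : Vs ∈ {W ∈ Mx Y | Module.finrank ℂ W = d - i₀} := hsup ⟨hVsmx, hVsr⟩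
    exact hVsn this.1.1
  have hAfin : {W ∈ Mx X | Module.finrank ℂ W = d - i₀}.Finite :=
    (mx_finite vX).subset (fun W hW => hW.1)
  refine ⟨⟨i₀, by omega⟩, ?_, ?_⟩
  · intro j hjlt
    have : (j : ℕ) < i₀ := hjlt
    unfold mu
    rw [E1 j this]
  · exact Set.ncard_lt_ncard E2 hAfin


theorem stabilizes (f : ℕ → Set (Fin d → ℂ)) (hF : ∀ n, IsFinUnionSubspaces (f n))
    (hdec : ∀ n, f (n + 1) ⊆ f n) : ∃ n, f (n + 1) = f n := by
  by_contra h
  push_neg at h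
  have hwf : WellFounded (Pi.Lex (· < ·) fun {i : Fin (d + 1)} => ((· < ·) : ℕ → ℕ → Prop)) :=
    Pi.Lex.wellFounded (· < ·) (fun _ => Nat.lt_wfRel.wf)
  obtain ⟨a, ⟨n, rfl⟩, hmin⟩ := hwf.has_min (Set.range (fun n => mu (f n))) ⟨_, ⟨0, rfl⟩⟩
  exact hmin _ ⟨n + 1, rfl⟩ (mu_descent (hF n) (hF (n + 1)) (hdec n) (h n))

end MaxInv

open MaxInv in
theorem exists_maximal_invariant
    {d : ℕ} {Act : Type} [Fintype Act]
    {I : Act → Type} [∀ α, Fintype (I α)]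
    (E : (α : Act) → I α → Matrix (Fin d) (Fin d) ℂ)
    (htp : ∀ α, ∑ i, (E α i)ᴴ * E α i = (1 : Matrix (Fin d) (Fin d) ℂ))
    (r : Set (Fin d → ℂ)) (hr : IsFinUnionSubspaces r) :
    ∃ x : Set (Fin d → ℂ), x ⊆ r ∧ IsFinUnionSubspaces x ∧
      (⋃ α : Act, applySet (E α) x) = x ∧
      ∀ x' : Set (Fin d → ℂ), x' ⊆ r → IsFinUnionSubspaces x' →
        (⋃ α : Act, applySet (E α) x') = x' → x' ⊆ x := by
  classical
  -- the decreasing iteration of `Gop`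
  set Y : ℕ → Set (Fin d → ℂ) := fun n => (Gop E)^[n] r with hYdef
  have hYsucc : ∀ n, Y (n + 1) = Gop E (Y n) := fun n => Function.iterate_succ_apply' _ _ _
  have hYfus : ∀ n, IsFinUnionSubspaces (Y n) := by
    intro n
    induction n with
    | zero => exact hr
    | succ n ih =>
      obtain ⟨m, v, hv⟩ := ih
      obtain ⟨κ, hκ, U, hGeq, hgood⟩ := Gop_rep E v
      letI := hκ
      rw [hYsucc, hv, hGeq]
      exact isFUS_of_fintype U
  have hYdec : ∀ n, Y (n + 1) ⊆ Y n := fun n => by rw [hYsucc]; exact Gop_subset E (Y n)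
  have hYr : ∀ n, Y n ⊆ r := by
    intro n
    induction n with
    | zero => exact subset_rfl
    | succ n ih => exact (hYdec n).trans ih
  obtain ⟨N, hN⟩ := stabilizes Y hYfus hYdec
  -- `Y N` is a pre-fixpoint of `Phi`
  have hpre : Phi E (Y N) ⊆ Y N := by
    obtain ⟨m, v, hv⟩ := hYfus N
    obtain ⟨κ, hκ, U, hGeq, hgood⟩ := Gop_rep E v
    letI := hκ
    have hYU : Y N = ⋃ p, ((U p : Submodule ℂ (Fin d → ℂ)) : Set (Fin d → ℂ)) := by
      rw [← hGeq, ← hv, ← hYsucc, hN]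
    intro x hx
    obtain ⟨α, hα⟩ := Set.mem_iUnion.mp hx
    obtain ⟨V, hVsub, hxV⟩ := (mem_applySet (E α)).mp hα
    rw [hYU] at hVsub
    obtain ⟨p, hp⟩ := exists_le_of_subset U V hVsub
    have h2 := (hgood p).2 α
    rw [← hv] at h2
    exact h2 (supSpan_mono (E α) hp hxV)
  -- the decreasing iteration of `Phi` starting from `Y N`
  set Z : ℕ → Set (Fin d → ℂ) := fun k => (Phi E)^[k] (Y N) with hZdef
  have hZsucc : ∀ k, Z (k + 1) = Phi E (Z k) := fun k => Function.iterate_succ_apply' _ _ _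
  have hZfus : ∀ k, IsFinUnionSubspaces (Z k) := by
    intro k
    induction k with
    | zero => exact hYfus N
    | succ k ih => rw [hZsucc]; exact isFUS_Phi E ih
  have hZdec : ∀ k, Z (k + 1) ⊆ Z k := by
    intro k
    induction k with
    | zero => rw [hZsucc]; exact hpre
    | succ k ih =>
      rw [hZsucc (k + 1)]
      exact (Phi_mono E ih).trans (hZsucc k).symm.subset
  have hZle : ∀ k, Z k ⊆ Y N := by
    intro k
    induction k with
    | zero => exact subset_rfl
    | succ k ih => exact (hZdec k).trans ih
  obtain ⟨K, hK⟩ := stabilizes Z hZfus hZdec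
  refine ⟨Z K, (hZle K).trans (hYr N), hZfus K, ?_, ?_⟩
  · show Phi E (Z K) = Z K
    rw [← hZsucc, hK]
  · intro x' hx'r hx'fus hfix'
    have hfix : Phi E x' = x' := hfix'
    -- `x'` is below every `Y n`
    have hx'Y : ∀ n, x' ⊆ Y n := by
      intro n
      induction n with
      | zero => exact hx'r
      | succ n ih =>
        rw [hYsucc]
        obtain ⟨m', w, hw⟩ := hx'fus
        intro z hz
        rw [hw] at hz
        obtain ⟨i, hzi⟩ := Set.mem_iUnion.mp hz
        refine (mem_Gop E).mpr ⟨w i, ⟨?_, ?_⟩, hzi⟩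
        · refine Set.Subset.trans ?_ ih
          rw [hw]
          exact Set.subset_iUnion (fun j => ((w j : Submodule ℂ (Fin d → ℂ)) : Set (Fin d → ℂ))) i
        · intro α
          have h1 : ((supSpan (E α) (w i) : Submodule ℂ (Fin d → ℂ)) : Set (Fin d → ℂ))
              ⊆ applySet (E α) x' := by
            intro y hy
            refine (mem_applySet (E α)).mpr ⟨w i, ?_, hy⟩
            rw [hw]
            exact Set.subset_iUnion (fun j => ((w j : Submodule ℂ (Fin d → ℂ)) : Set (Fin d → ℂ))) i
          refine h1.trans (Set.Subset.trans ?_ (hfix ▸ ih))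
          exact Set.subset_iUnion (fun α => applySet (E α) x') α
    -- `x'` is below every `Z k`
    have hx'Z : ∀ k, x' ⊆ Z k := by
      intro k
      induction k with
      | zero => exact hx'Y N
      | succ k ih =>
        rw [hZsucc, ← hfix]
        exact Phi_mono E ih
    exact hx'Z K
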